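/- Given a positive definite density matrix ρ₁₂ on H₁ ⊗ H₂ with marginal ρ₁ = Tr₂ ρ₁₂, the map T_ρ(τ) = ρ₁₂^{1/2} (ρ₁^{−1/2} τ ρ₁^{−1/2} ⊗ I₂) ρ₁₂^{1/2} sending operators on H₁ to operators on H₁ ⊗ H₂ is completely positive and trace preserving, and T_ρ(ρ₁) = ρ₁₂. -/

import Mathlib

open Matrix Kronecker
open scoped ComplexOrder

noncomputable def mexp {n : Type*} [Fintype n] [DecidableEq n] (A : Matrix n n ℂ) : Matrix n n ℂ :=
  if h : A.IsHermitian then h.cfc Real.exp else 0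

noncomputable def mlog {n : Type*} [Fintype n] [DecidableEq n] (A : Matrix n n ℂ) : Matrix n n ℂ :=
  if h : A.IsHermitian then h.cfc Real.log else 0

open scoped Classical in
noncomputable def msqrt {n : Type*} [Fintype n] [DecidableEq n] (A : Matrix n n ℂ) : Matrix n n ℂ :=
  if h : A.PosSemidef then (h.1.eigenvectorUnitary : Matrix n n ℂ) *
    diagonal ((↑) ∘ Real.sqrt ∘ h.1.eigenvalues) * (star h.1.eigenvectorUnitary : Matrix n n ℂ) else 0

noncomputable def entropy {n : Type*} [Fintype n] [DecidableEq n] (ρ : Matrix n n ℂ) : ℝ :=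
  -((ρ * mlog ρ).trace.re)

noncomputable def relEnt {n : Type*} [Fintype n] [DecidableEq n] (ρ σ : Matrix n n ℂ) : ℝ :=
  ((ρ * (mlog ρ - mlog σ)).trace.re)

noncomputable def ptrace₂ {n m : Type*} [Fintype n] [Fintype m]
    (ρ : Matrix (n × m) (n × m) ℂ) : Matrix n n ℂ :=
  Matrix.of fun i j => ∑ k, ρ (i, k) (j, k)

noncomputable def ptrace₁ {n m : Type*} [Fintype n] [Fintype m]
    (ρ : Matrix (n × m) (n × m) ℂ) : Matrix m m ℂ :=
  Matrix.of fun i j => ∑ k, ρ (k, i) (k, j)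

noncomputable def traceNorm {n : Type*} [Fintype n] [DecidableEq n] (A : Matrix n n ℂ) : ℝ :=
  ((((Matrix.posSemidef_conjTranspose_mul_self A).1.eigenvectorUnitary : Matrix n n ℂ) *
    diagonal (((↑) : ℝ → ℂ) ∘ Real.sqrt ∘ (Matrix.posSemidef_conjTranspose_mul_self A).1.eigenvalues) *
    (star (Matrix.posSemidef_conjTranspose_mul_self A).1.eigenvectorUnitary : Matrix n n ℂ)).trace).re

noncomputable def Matrix.PosSemidef.sqrt {n : Type*} [Fintype n] [DecidableEq n] {A : Matrix n n ℂ}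
    (h : A.PosSemidef) : Matrix n n ℂ :=
  (h.1.eigenvectorUnitary : Matrix n n ℂ) *
    diagonal ((↑) ∘ Real.sqrt ∘ h.1.eigenvalues) * (star h.1.eigenvectorUnitary : Matrix n n ℂ)

lemma Matrix.PosSemidef.posSemidef_sqrt {n : Type*} [Fintype n] [DecidableEq n] {A : Matrix n n ℂ}
    (h : A.PosSemidef) : h.sqrt.PosSemidef := by
  unfold Matrix.PosSemidef.sqrt
  have hU : (star h.1.eigenvectorUnitary : Matrix n n ℂ) = (h.1.eigenvectorUnitary : Matrix n n ℂ)ᴴ := rfl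
  rw [hU]
  refine PosSemidef.mul_mul_conjTranspose_same ?_ _
  rw [posSemidef_diagonal_iff]
  intro i
  simp only [Function.comp_apply]
  exact_mod_cast Real.sqrt_nonneg _

lemma Matrix.PosSemidef.sqrt_mul_self {n : Type*} [Fintype n] [DecidableEq n] {A : Matrix n n ℂ}
    (h : A.PosSemidef) : h.sqrt * h.sqrt = A := by
  unfold Matrix.PosSemidef.sqrt
  conv_rhs => rw [h.1.spectral_theorem]
  rw [Unitary.conjStarAlgAut_apply]
  have hUU : (star h.1.eigenvectorUnitary : Matrix n n ℂ) * (h.1.eigenvectorUnitary : Matrix n n ℂ) = 1 :=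
    Unitary.coe_star_mul_self _
  simp only [Matrix.mul_assoc]
  rw [← Matrix.mul_assoc (star _ : Matrix n n ℂ), hUU, Matrix.one_mul, ← Matrix.mul_assoc (diagonal _),
    diagonal_mul_diagonal]
  congr 3
  ext i
  simp only [Function.comp_apply]
  rw [← Complex.ofReal_mul, Real.mul_self_sqrt (h.eigenvalues_nonneg i)]
  rfl

set_option linter.unusedSectionVars false

section aux

variable {n m : Type*} [Fintype n] [DecidableEq n] [Fintype m] [DecidableEq m]

lemma aux_kron_conjT (A : Matrix n n ℂ) (B : Matrix m m ℂ) :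
    (A ⊗ₖ B)ᴴ = Aᴴ ⊗ₖ Bᴴ := by
  ext ⟨i, μ⟩ ⟨j, ν⟩
  simp [Matrix.conjTranspose_apply, Matrix.kroneckerMap_apply, mul_comm]

lemma aux_kron_one_psd {B : Matrix n n ℂ} (hB : B.PosSemidef) :
    (B ⊗ₖ (1 : Matrix m m ℂ)).PosSemidef := by
  have h : B ⊗ₖ (1 : Matrix m m ℂ) = (hB.sqrt ⊗ₖ 1)ᴴ * (hB.sqrt ⊗ₖ 1) := by
    rw [aux_kron_conjT, hB.posSemidef_sqrt.isHermitian.eq, Matrix.conjTranspose_one,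
      ← Matrix.mul_kronecker_mul, hB.sqrt_mul_self, one_mul]
  rw [h]
  exact Matrix.posSemidef_conjTranspose_mul_self _

lemma aux_trace_mul_kron_one (ρ : Matrix (n × m) (n × m) ℂ) (B : Matrix n n ℂ) :
    (ρ * (B ⊗ₖ (1 : Matrix m m ℂ))).trace = (ptrace₂ ρ * B).trace := by
  simp only [Matrix.trace, Matrix.diag, Matrix.mul_apply, ptrace₂, Matrix.of_apply,
    Matrix.kroneckerMap_apply, Matrix.one_apply, Fintype.sum_prod_type, mul_ite, mul_one,
    mul_zero, Finset.sum_ite_eq', Finset.mem_univ, if_true, Finset.sum_mul]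
  exact Finset.sum_congr rfl fun i _ => Finset.sum_comm

lemma aux_block_conj {s t : Type*} [Fintype s] [DecidableEq s] [Fintype t] [DecidableEq t]
    (X Y : Matrix s s ℂ) (P : Matrix (t × s) (t × s) ℂ) (a b : t) (p q : s) :
    ((((1 : Matrix t t ℂ) ⊗ₖ X) * P * ((1 : Matrix t t ℂ) ⊗ₖ Y)) (a, p) (b, q)) =
    (X * (Matrix.of fun p' q' => P (a, p') (b, q')) * Y) p q := by
  simp only [Matrix.mul_apply, Matrix.kroneckerMap_apply, Matrix.one_apply, Matrix.of_apply,
    Fintype.sum_prod_type_right, ite_mul, zero_mul, mul_ite, mul_zero, one_mul,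
    Finset.sum_ite_eq, Finset.sum_ite_eq', Finset.mem_univ, if_true]

end aux

theorem stmt18 {n m : Type*} [Fintype n] [DecidableEq n] [Fintype m] [DecidableEq m]
    (ρ₁₂ : Matrix (n × m) (n × m) ℂ) (hρ : ρ₁₂.PosDef) (htr : ρ₁₂.trace = 1)
    (T : Matrix n n ℂ → Matrix (n × m) (n × m) ℂ)
    (hT : ∀ τ : Matrix n n ℂ, T τ = msqrt ρ₁₂ *
        (((msqrt (ptrace₂ ρ₁₂))⁻¹ * τ * (msqrt (ptrace₂ ρ₁₂))⁻¹) ⊗ₖ (1 : Matrix m m ℂ)) *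
        msqrt ρ₁₂) :
    (∀ k : ℕ, ∀ M : Matrix (Fin k × n) (Fin k × n) ℂ, M.PosSemidef →
      (Matrix.of fun p q : Fin k × (n × m) =>
        T (Matrix.of fun i j => M (p.1, i) (q.1, j)) p.2 q.2).PosSemidef) ∧
    (∀ τ : Matrix n n ℂ, (T τ).trace = τ.trace) ∧
    T (ptrace₂ ρ₁₂) = ρ₁₂ := by
  classical
  have hm : Nonempty m := by
    by_contra h
    rw [not_nonempty_iff] at h
    have h0 : ρ₁₂.trace = 0 := by
      have : IsEmpty (n × m) := Prod.isEmpty_right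
      simp [Matrix.trace]
    rw [h0] at htr
    exact zero_ne_one htr
  -- ρ₁ is positive definite
  have hρ₁ : (ptrace₂ ρ₁₂).PosDef := by
    rw [posDef_iff_dotProduct_mulVec]
    constructor
    · ext i j
      simp only [Matrix.conjTranspose_apply, ptrace₂, Matrix.of_apply, star_sum]
      refine Finset.sum_congr rfl fun μ _ => ?_
      have := congrFun (congrFun hρ.isHermitian (i, μ)) (j, μ)
      simpa [Matrix.conjTranspose_apply] using this
    · intro x hx
      have key : star x ⬝ᵥ (ptrace₂ ρ₁₂) *ᵥ x =
          ∑ μ : m, star (fun p : n × m => if p.2 = μ then x p.1 else 0) ⬝ᵥ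
            ρ₁₂ *ᵥ (fun p : n × m => if p.2 = μ then x p.1 else 0) := by
        simp only [dotProduct, Matrix.mulVec, ptrace₂, Matrix.of_apply, Pi.star_apply,
          apply_ite (star : ℂ → ℂ), star_zero, Fintype.sum_prod_type, ite_mul, zero_mul,
          mul_ite, mul_zero, Finset.mul_sum, Finset.sum_mul, Finset.sum_ite_eq,
          Finset.sum_ite_eq', Finset.mem_univ, if_true]
        have h1 : ∀ (μ : m) (i : n),
            (∑ σ : m, ∑ j : n, if σ = μ then star (x i) * (ρ₁₂ (i, σ) (j, μ) * x j) else 0) =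
            ∑ j : n, star (x i) * (ρ₁₂ (i, μ) (j, μ) * x j) := by
          intro μ i
          rw [Finset.sum_comm]
          simp
        simp_rw [h1]
        exact (Finset.sum_congr rfl fun i _ => Finset.sum_comm).trans Finset.sum_comm
      rw [key]
      obtain ⟨i₀, hi₀⟩ := Function.ne_iff.mp hx
      refine Finset.sum_pos (fun μ _ => hρ.dotProduct_mulVec_pos ?_) (Finset.univ_nonempty)
      · intro hy
        have := congrFun hy (i₀, μ)
        simp at this
        exact hi₀ this
  -- notation
  set S : Matrix (n × m) (n × m) ℂ := hρ.posSemidef.sqrt with hS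
  set Q : Matrix n n ℂ := hρ₁.posSemidef.sqrt with hQ
  have hmS : msqrt ρ₁₂ = S := dif_pos hρ.posSemidef
  have hmQ : msqrt (ptrace₂ ρ₁₂) = Q := dif_pos hρ₁.posSemidef
  set A : Matrix n n ℂ := Q⁻¹ with hA
  have hSH : S.IsHermitian := hρ.posSemidef.posSemidef_sqrt.isHermitian
  have hQH : Q.IsHermitian := hρ₁.posSemidef.posSemidef_sqrt.isHermitian
  have hSS : S * S = ρ₁₂ := hρ.posSemidef.sqrt_mul_self
  have hQQ : Q * Q = ptrace₂ ρ₁₂ := hρ₁.posSemidef.sqrt_mul_self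
  have hQdet : IsUnit Q.det := by
    have hd : Q.det * Q.det = (ptrace₂ ρ₁₂).det := by rw [← Matrix.det_mul, hQQ]
    have : (ptrace₂ ρ₁₂).det ≠ 0 := hρ₁.det_pos.ne'
    rw [← hd] at this
    exact isUnit_iff_ne_zero.mpr (left_ne_zero_of_mul this)
  have hAH : A.IsHermitian := hQH.inv
  have hAρA : A * (ptrace₂ ρ₁₂) * A = 1 := by
    rw [← hQQ, hA, ← Matrix.mul_assoc, Matrix.nonsing_inv_mul _ hQdet,
      one_mul, Matrix.mul_nonsing_inv _ hQdet]
  -- T rewritten with C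
  set C : Matrix (n × m) (n × m) ℂ := (A ⊗ₖ (1 : Matrix m m ℂ)) * S with hC
  have hCH : Cᴴ = S * (A ⊗ₖ (1 : Matrix m m ℂ)) := by
    rw [hC, Matrix.conjTranspose_mul, aux_kron_conjT, hAH.eq, Matrix.conjTranspose_one, hSH.eq]
  have hTC : ∀ τ : Matrix n n ℂ, T τ = Cᴴ * (τ ⊗ₖ (1 : Matrix m m ℂ)) * C := by
    intro τ
    rw [hT, hmS, hmQ, ← hA, hCH, hC]
    have hk : (A * τ * A) ⊗ₖ (1 : Matrix m m ℂ) =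
        (A ⊗ₖ (1 : Matrix m m ℂ)) * (τ ⊗ₖ (1 : Matrix m m ℂ)) * (A ⊗ₖ (1 : Matrix m m ℂ)) := by
      rw [← Matrix.mul_kronecker_mul, ← Matrix.mul_kronecker_mul, mul_one, mul_one]
    rw [hk]
    simp only [Matrix.mul_assoc]
  refine ⟨?_, ?_, ?_⟩
  · -- complete positivity
    intro k M hM
    set e : Fin k × (n × m) → (Fin k × n) × m := fun p => ((p.1, p.2.1), p.2.2) with he
    have hMkron : ((M ⊗ₖ (1 : Matrix m m ℂ)).submatrix e e).PosSemidef :=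
      (aux_kron_one_psd hM).submatrix e
    have hfinal := hMkron.conjTranspose_mul_mul_same ((1 : Matrix (Fin k) (Fin k) ℂ) ⊗ₖ C)
    have heq : (Matrix.of fun p q : Fin k × (n × m) =>
        T (Matrix.of fun i j => M (p.1, i) (q.1, j)) p.2 q.2) =
        ((1 : Matrix (Fin k) (Fin k) ℂ) ⊗ₖ C)ᴴ *
          ((M ⊗ₖ (1 : Matrix m m ℂ)).submatrix e e) *
          ((1 : Matrix (Fin k) (Fin k) ℂ) ⊗ₖ C) := by
      have hCT : ((1 : Matrix (Fin k) (Fin k) ℂ) ⊗ₖ C)ᴴ =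
          (1 : Matrix (Fin k) (Fin k) ℂ) ⊗ₖ Cᴴ := by
        rw [aux_kron_conjT, Matrix.conjTranspose_one]
      have hsub : ∀ a b : Fin k,
          (Matrix.of fun p' q' : n × m => ((M ⊗ₖ (1 : Matrix m m ℂ)).submatrix e e) (a, p') (b, q')) =
          ((Matrix.of fun i j => M (a, i) (b, j)) ⊗ₖ (1 : Matrix m m ℂ)) := by
        intro a b
        ext ⟨u, σ⟩ ⟨v, τ'⟩
        rfl
      rw [hCT]
      ext ⟨a, p⟩ ⟨b, q⟩
      rw [Matrix.of_apply, hTC, aux_block_conj Cᴴ C _ a b p q, hsub a b]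
    rw [heq]
    exact hfinal
  · -- trace preserving
    intro τ
    rw [hT, hmS, hmQ, ← hA]
    rw [Matrix.trace_mul_cycle, hSS, aux_trace_mul_kron_one,
      ← Matrix.mul_assoc, ← Matrix.mul_assoc, Matrix.trace_mul_cycle, ← Matrix.mul_assoc,
      hAρA, one_mul]
  · -- T ρ₁ = ρ₁₂
    rw [hT, hmS, hmQ, ← hA, hAρA, Matrix.one_kronecker_one, mul_one, hSS]
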